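/- Truncation of the first q-polylogarithm: Let d ≥ 2 and m ≥ 1 be integers. Let A be the localization of ℤ[q] at the multiplicative set generated by the q-integers [k]_q for all integers k ≥ 1 with d ∤ k, and let Ā := A/([m]_q). Then in the formal power series ring Ā[[T]] one has the equality (1 − T^m) · ∑_{k ≥ 1, d ∤ k} T^k·[k]_q^{−1} = ∑_{0 < k < m, d ∤ k} T^k·[k]_q^{−1}, where the right-hand side is a polynomial of degree < m. -/

import Mathlib

open Polynomial Finset

noncomputable section

/-- The `q`-integer `[n]_q = 1 + q + ⋯ + q^{n−1}` in `ℤ[q]`. -/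
def qInt (n : ℕ) : Polynomial ℤ := ∑ i ∈ range n, X ^ i

/-- The multiplicative subset of `ℤ[q]` generated by the `q`-integers `[k]_q` for the
integers `k ≥ 1` with `d ∤ k`. -/
def locSet (d : ℕ) : Submonoid (Polynomial ℤ) :=
  Submonoid.closure {x | ∃ k : ℕ, 1 ≤ k ∧ ¬d ∣ k ∧ x = qInt k}

/-- The localization `A` of `ℤ[q]` at the above multiplicative subset. -/
abbrev LocQ (d : ℕ) : Type := Localization (locSet d)

instance (d : ℕ) : CommRing (LocQ d) := inferInstance

instance (d : ℕ) : Algebra (Polynomial ℤ) (LocQ d) := inferInstance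

/-- The quotient `Ā := A/([m]_q)`. -/
abbrev Abar (d m : ℕ) : Type :=
  LocQ d ⧸ Ideal.span {(algebraMap (Polynomial ℤ) (LocQ d)) (qInt m)}

instance (d m : ℕ) : CommRing (Abar d m) := inferInstance

/-- The canonical ring homomorphism `ℤ[q] → Ā`. -/
def θ (d m : ℕ) : Polynomial ℤ →+* Abar d m :=
  (Ideal.Quotient.mk _).comp (algebraMap (Polynomial ℤ) (LocQ d))

/-- Truncation of the first `q`-polylogarithm: in `Ā[[T]]`, where
`Ā = ℤ[q][[k]_q^{-1} (k ≥ 1, d∤k)]/([m]_q)`, one has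
`(1 − T^m) · ∑_{k ≥ 1, d∤k} T^k·[k]_q^{−1} = ∑_{0 < k < m, d∤k} T^k·[k]_q^{−1}`,
the right-hand side being a polynomial of degree `< m`. -/
-- auxiliary lemmas

lemma qInt_add (a b : ℕ) : qInt (a + b) = qInt a + X ^ a * qInt b := by
  simp [qInt, Finset.sum_range_add, Finset.mul_sum, pow_add]

lemma theta_qInt_m (d m : ℕ) : θ d m (qInt m) = 0 := by
  simp only [θ, RingHom.comp_apply]
  rw [Ideal.Quotient.eq_zero_iff_mem]
  exact Ideal.subset_span rfl

lemma theta_qInt_add (d m a : ℕ) : θ d m (qInt (a + m)) = θ d m (qInt a) := by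
  rw [qInt_add, map_add, map_mul, theta_qInt_m, mul_zero, add_zero]

section Phi

variable (d m : ℕ) (hd : 2 ≤ d) (hdm : d ∣ m)

def ζc (d : ℕ) : ℂ := Complex.exp (2 * Real.pi * Complex.I / d)

lemma hζ (hd : 2 ≤ d) : IsPrimitiveRoot (ζc d) d :=
  Complex.isPrimitiveRoot_exp d (by omega)

def ev (d : ℕ) : Polynomial ℤ →+* ℂ := eval₂RingHom (Int.castRingHom ℂ) (ζc d)

lemma ev_qInt (k : ℕ) : ev d (qInt k) = ∑ i ∈ range k, (ζc d) ^ i := by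
  simp [ev, qInt]

lemma ev_qInt_eq_zero (hd : 2 ≤ d) {k : ℕ} (hk : d ∣ k) : ev d (qInt k) = 0 := by
  rw [ev_qInt, geom_sum_eq ((hζ d hd).ne_one (by omega)),
    ((hζ d hd).pow_eq_one_iff_dvd k).2 hk, sub_self, zero_div]

lemma ev_qInt_ne_zero (hd : 2 ≤ d) {k : ℕ} (hk1 : 1 ≤ k) (hk : ¬ d ∣ k) :
    ev d (qInt k) ≠ 0 := by
  rw [ev_qInt, geom_sum_eq ((hζ d hd).ne_one (by omega))]
  refine div_ne_zero (sub_ne_zero.2 ?_) (sub_ne_zero.2 ((hζ d hd).ne_one (by omega)))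
  exact fun h => hk (((hζ d hd).pow_eq_one_iff_dvd k).1 h)

lemma ev_units (hd : 2 ≤ d) : ∀ y : locSet d, IsUnit (ev d y) := by
  rintro ⟨y, hy⟩
  refine Submonoid.closure_induction (motive := fun x _ => IsUnit (ev d x)) ?_ ?_ ?_ hy
  · rintro x ⟨k, hk1, hk, rfl⟩
    exact isUnit_iff_ne_zero.2 (ev_qInt_ne_zero d hd hk1 hk)
  · simp
  · intro x y _ _ hx hy
    rw [map_mul]; exact hx.mul hy

def φ (hd : 2 ≤ d) (hdm : d ∣ m) : Abar d m →+* ℂ :=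
  Ideal.Quotient.lift _ (IsLocalization.lift (M := locSet d) (ev_units d hd)) (by
    intro a ha
    rw [Ideal.mem_span_singleton] at ha
    obtain ⟨r, rfl⟩ := ha
    rw [map_mul, IsLocalization.lift_eq, ev_qInt_eq_zero d hd hdm, zero_mul])

lemma φ_theta (hd : 2 ≤ d) (hdm : d ∣ m) (p : Polynomial ℤ) :
    φ d m hd hdm (θ d m p) = ev d p := by
  simp only [φ, θ, RingHom.comp_apply, Ideal.Quotient.lift_mk, IsLocalization.lift_eq]

lemma inv_theta_eq_zero (hd : 2 ≤ d) (hdm : d ∣ m) {k : ℕ} (hk : d ∣ k) :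
    Ring.inverse (θ d m (qInt k)) = 0 := by
  apply Ring.inverse_non_unit
  intro h
  have := h.map (φ d m hd hdm)
  rw [φ_theta, ev_qInt_eq_zero d hd hk] at this
  exact not_isUnit_zero this

end Phi

theorem first_qpolylog_truncation (d m : ℕ) (hd : 2 ≤ d) (hm : 1 ≤ m) :
    (1 - PowerSeries.X ^ m) *
        PowerSeries.mk
          (fun k => if 1 ≤ k ∧ ¬d ∣ k then Ring.inverse (θ d m (qInt k)) else 0) =
      ∑ k ∈ (Finset.Ioo 0 m).filter (fun k => ¬d ∣ k),
        PowerSeries.C (R := Abar d m) (Ring.inverse (θ d m (qInt k))) * PowerSeries.X ^ k := by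
  by_cases hdm : d ∣ m
  · -- nontrivial case
    set g : ℕ → Abar d m := fun k => Ring.inverse (θ d m (qInt k)) with hgdef
    have hg0 : ∀ k, d ∣ k → g k = 0 := fun k hk => inv_theta_eq_zero d m hd hdm hk
    have hf : (fun k => if 1 ≤ k ∧ ¬d ∣ k then Ring.inverse (θ d m (qInt k)) else 0) = g := by
      funext k
      split_ifs with h
      · rfl
      · push_neg at h
        rcases Nat.eq_zero_or_pos k with rfl | hk
        · exact (hg0 0 (dvd_zero d)).symm
        · exact (hg0 k (h hk)).symm
    rw [hf]
    ext n
    rw [sub_mul, one_mul, map_sub, PowerSeries.coeff_X_pow_mul', PowerSeries.coeff_mk,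
      map_sum]
    have hrhs : ∀ k ∈ (Finset.Ioo 0 m).filter (fun k => ¬d ∣ k),
        (PowerSeries.coeff (R := Abar d m) n)
          (PowerSeries.C (R := Abar d m) (g k) * PowerSeries.X ^ k) =
        if n = k then g k else 0 := by
      intro k _
      rw [PowerSeries.coeff_C_mul, PowerSeries.coeff_X_pow]
      split_ifs with h <;> simp [h]
    rw [Finset.sum_congr rfl hrhs]
    by_cases hmn : m ≤ n
    · rw [if_pos hmn]
      have hsum : ∑ k ∈ (Finset.Ioo 0 m).filter (fun k => ¬d ∣ k),
          (if n = k then g k else 0) = 0 := by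
        apply Finset.sum_eq_zero
        intro k hk
        simp only [Finset.mem_filter, Finset.mem_Ioo] at hk
        rw [if_neg (by omega)]
      rw [hsum, PowerSeries.coeff_mk, sub_eq_zero]
      have h2 : θ d m (qInt n) = θ d m (qInt (n - m)) := by
        conv_lhs => rw [show n = (n - m) + m by omega]
        rw [theta_qInt_add]
      simp only [hgdef, h2]
    · rw [if_neg hmn, sub_zero]
      by_cases hn : 0 < n ∧ ¬ d ∣ n
      · rw [Finset.sum_eq_single n]
        · rw [if_pos rfl]
        · intro k _ hk; rw [if_neg (Ne.symm hk)]
        · intro h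
          exfalso
          apply h
          simp only [Finset.mem_filter, Finset.mem_Ioo]
          exact ⟨⟨hn.1, by omega⟩, hn.2⟩
      · push_neg at hn
        have hgn : g n = 0 := by
          rcases Nat.eq_zero_or_pos n with rfl | hpos
          · exact hg0 0 (dvd_zero d)
          · exact hg0 n (hn hpos)
        rw [hgn]
        apply (Finset.sum_eq_zero ?_).symm
        intro k hk
        simp only [Finset.mem_filter, Finset.mem_Ioo] at hk
        split_ifs with h
        · rw [← h]; exact hgn
        · rfl
  · -- trivial ring case: [m]_q is invertible in LocQ d, so Abar d m is trivial
    have hmem : qInt m ∈ locSet d :=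
      Submonoid.subset_closure ⟨m, hm, hdm, rfl⟩
    have hu : IsUnit ((algebraMap (Polynomial ℤ) (LocQ d)) (qInt m)) :=
      IsLocalization.map_units (LocQ d) (⟨qInt m, hmem⟩ : locSet d)
    have htop : Ideal.span {(algebraMap (Polynomial ℤ) (LocQ d)) (qInt m)} = ⊤ :=
      Ideal.span_singleton_eq_top.2 hu
    have : Subsingleton (Abar d m) := by
      rw [Ideal.Quotient.subsingleton_iff]
      exact htop
    exact Subsingleton.elim _ _

end
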